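/- Let H be a separable analytic reproducing kernel Hilbert space of E-valued functions on 𝔻 on which the multiplication operator M_z is bounded, and let E₀ be a subset of E whose linear span is dense in E. If for every η ∈ E₀ the doubly indexed family c_{n,m} := (1/(n!·m!)) ⟨K_{m,η}, K_{n,η}⟩_H (n, m ∈ ℕ) is F-summable, then M_z* is chaotic on H. -/

import Mathlib

open Metric Filter ContinuousLinearMap

/-- A doubly indexed family `c : ℕ → ℕ → ℂ` is `F`-summable if for every `ε > 0` there is
`N ∈ ℕ` such that `|∑_{n ∈ F} ∑_{m ∈ F} c n m| < ε` for every finite set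
`F ⊆ {N, N+1, …}`. -/
def FSummable (c : ℕ → ℕ → ℂ) : Prop :=
  ∀ ε > (0 : ℝ), ∃ N : ℕ, ∀ F : Finset ℕ, (∀ n ∈ F, N ≤ n) →
    ‖∑ n ∈ F, ∑ m ∈ F, c n m‖ < ε

lemma aux_smul_deriv {E : Type*} [NormedAddCommGroup E] [NormedSpace ℂ E] [CompleteSpace E]
    {g : ℂ → E} (hg : AnalyticOnNhd ℂ g (ball (0:ℂ) 1)) (n : ℕ) :
    ∀ w ∈ ball (0:ℂ) 1, iteratedDeriv n (fun z => z • g z) w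
      = w • iteratedDeriv n g w + (n : ℂ) • iteratedDeriv (n-1) g w := by
  have hBo : IsOpen (ball (0:ℂ) 1) := isOpen_ball
  have hgk : ∀ m : ℕ, AnalyticOnNhd ℂ (iteratedDeriv m g) (ball (0:ℂ) 1) := by
    intro m
    have := hg.iterated_deriv m
    rwa [iteratedDeriv_eq_iterate]
  have hder : ∀ (m : ℕ) (w : ℂ), w ∈ ball (0:ℂ) 1 →
      HasDerivAt (iteratedDeriv m g) (iteratedDeriv (m+1) g w) w := by
    intro m w hw
    rw [iteratedDeriv_succ]
    exact ((hgk m w hw).differentiableAt.hasDerivAt)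
  induction n with
  | zero => intro w hw; simp
  | succ n IH =>
    intro w hw
    have hev : iteratedDeriv n (fun z => z • g z) =ᶠ[nhds w]
        fun z => z • iteratedDeriv n g z + (n : ℂ) • iteratedDeriv (n-1) g z := by
      filter_upwards [hBo.mem_nhds hw] with z hz using IH z hz
    rw [iteratedDeriv_succ, hev.deriv_eq]
    have h1 : HasDerivAt (fun z : ℂ => z • iteratedDeriv n g z)
        ((1:ℂ) • iteratedDeriv n g w + w • iteratedDeriv (n+1) g w) w := by
      have := (hasDerivAt_id' w).smul (hder n w hw)
      rw [add_comm]
      exact this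
    have h2 : HasDerivAt (fun z : ℂ => (n : ℂ) • iteratedDeriv (n-1) g z)
        ((n : ℂ) • iteratedDeriv (n-1+1) g w) w := (hder (n-1) w hw).const_smul _
    have h3 : deriv (fun z : ℂ => z • iteratedDeriv n g z + (n : ℂ) • iteratedDeriv (n-1) g z) w = _ :=
      (h1.add h2).deriv
    rw [h3]
    have hcoe : (n : ℂ) • iteratedDeriv (n-1+1) g w = (n : ℂ) • iteratedDeriv n g w := by
      cases n with
      | zero => simp
      | succ m => norm_num
    rw [hcoe, one_smul]
    simp only [Nat.add_sub_cancel]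
    push_cast
    rw [add_smul, one_smul]
    abel

/-- Theorem (chaos): Let `H` be a separable analytic reproducing kernel Hilbert space of
`E`-valued functions on the unit disc on which `M_z` is bounded, and let `E₀ ⊆ E` have
dense linear span. If for every `η ∈ E₀` the family
`c_{n,m} = (1/(n!·m!)) ⟨K_{m,η}, K_{n,η}⟩` is `F`-summable, then `M_z*` is chaotic:
hypercyclic with a dense set of periodic points. -/
theorem stmt8 {H E : Type*}
    [NormedAddCommGroup H] [InnerProductSpace ℂ H] [CompleteSpace H]
    [TopologicalSpace.SeparableSpace H]
    [NormedAddCommGroup E] [InnerProductSpace ℂ E] [CompleteSpace E]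
    (ι : H →ₗ[ℂ] (ℂ → E))
    (hinj : ∀ f g : H, Set.EqOn (ι f) (ι g) (ball (0 : ℂ) 1) → f = g)
    (hanal : ∀ f : H, DifferentiableOn ℂ (ι f) (ball (0 : ℂ) 1))
    (heval : ∀ w ∈ ball (0 : ℂ) 1, Continuous fun f : H => ι f w)
    (Mz : H →L[ℂ] H)
    (hMz : ∀ f : H, ∀ w ∈ ball (0 : ℂ) 1, ι (Mz f) w = w • ι f w)
    (K : ℕ → E → H)
    (hK : ∀ (n : ℕ) (η : E) (f : H),
      (inner ℂ f (K n η) : ℂ) =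
        (inner ℂ (iteratedDerivWithin n (ι f) (ball (0 : ℂ) 1) 0) η : ℂ))
    (E₀ : Set E)
    (hE₀ : Dense ((Submodule.span ℂ E₀ : Submodule ℂ E) : Set E))
    (hsum : ∀ η ∈ E₀, FSummable (fun n m : ℕ =>
      (1 / ((n.factorial : ℂ) * (m.factorial : ℂ))) * (inner ℂ (K m η) (K n η) : ℂ))) :
    (∃ g : H, Dense (Set.range fun m : ℕ => ((adjoint Mz) ^ m) g)) ∧
      Dense {y : H | ∃ k : ℕ, 1 ≤ k ∧ ((adjoint Mz) ^ k) y = y} := by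
  classical
  set T := adjoint Mz with hT
  have h0B : (0:ℂ) ∈ ball (0:ℂ) 1 := mem_ball_self one_pos
  have hBo : IsOpen (ball (0:ℂ) 1) := isOpen_ball
  -- within = global derivatives at 0
  have hKd : ∀ (n : ℕ) (η : E) (f : H),
      (inner ℂ f (K n η) : ℂ) = inner ℂ (iteratedDeriv n (ι f) 0) η := by
    intro n η f
    rw [hK n η f]
    congr 2
    rw [iteratedDerivWithin_eq_iteratedFDerivWithin, iteratedDeriv_eq_iteratedFDeriv,
      iteratedFDerivWithin_of_isOpen n hBo h0B]
  -- action of T on kernels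
  have hT0 : ∀ η : E, T (K 0 η) = 0 := by
    intro η
    apply ext_inner_left ℂ
    intro f
    rw [hT, adjoint_inner_right, hKd, inner_zero_right]
    have hev : ι (Mz f) =ᶠ[nhds (0:ℂ)] fun z => z • ι f z := by
      filter_upwards [hBo.mem_nhds h0B] with z hz using hMz f z hz
    rw [hev.iteratedDeriv_eq 0]
    simp
  have hTsucc : ∀ (n : ℕ) (η : E), T (K (n+1) η) = ((n:ℂ)+1) • K n η := by
    intro n η
    apply ext_inner_left ℂ
    intro f
    rw [hT, adjoint_inner_right, hKd, inner_smul_right, hKd]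
    have hev : ι (Mz f) =ᶠ[nhds (0:ℂ)] fun z => z • ι f z := by
      filter_upwards [hBo.mem_nhds h0B] with z hz using hMz f z hz
    rw [hev.iteratedDeriv_eq (n+1)]
    rw [aux_smul_deriv ((hanal f).analyticOnNhd hBo) (n+1) 0 h0B]
    simp only [zero_smul, zero_add, Nat.add_sub_cancel, Nat.cast_add, Nat.cast_one]
    rw [inner_smul_left]
    congr 1
    simp [Complex.conj_natCast]
  set e : ℕ → E → H := fun n η => ((n.factorial : ℂ))⁻¹ • K n η with he
  have hfac : ∀ n : ℕ, ((n.factorial : ℂ)) ≠ 0 := by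
    intro n; exact_mod_cast Nat.cast_ne_zero.mpr (Nat.factorial_ne_zero n)
  have hKe : ∀ n η, K n η = ((n.factorial : ℂ)) • e n η := by
    intro n η; rw [he]; simp [smul_smul, mul_inv_cancel₀ (hfac n)]
  have hTe0 : ∀ η, T (e 0 η) = 0 := by
    intro η; rw [he]; simp [map_smul, hT0]
  have hTe : ∀ n η, T (e (n+1) η) = e n η := by
    intro n η
    rw [he]
    simp only [map_smul, hTsucc n η, smul_smul]
    congr 1
    have hne : ((n:ℂ)+1) ≠ 0 := Nat.cast_add_one_ne_zero n
    rw [Nat.factorial_succ]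
    push_cast
    rw [mul_inv, mul_assoc, mul_comm ((n.factorial:ℂ))⁻¹, ← mul_assoc,
      inv_mul_cancel₀ hne, one_mul]
  -- powers
  have hTpow : ∀ (k n : ℕ) (η : E), (T^k) (e (n+k) η) = e n η := by
    intro k
    induction k with
    | zero => intro n η; simp
    | succ k IH =>
      intro n η
      rw [pow_succ, mul_apply_eq_comp]
      have : n + (k+1) = (n+k) + 1 := by omega
      rw [this, hTe (n+k) η, IH n η]
  have hTzero : ∀ (k n : ℕ) (η : E), n < k → (T^k) (e n η) = 0 := by
    have base : ∀ (n : ℕ) (η : E), (T^(n+1)) (e n η) = 0 := by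
      intro n
      induction n with
      | zero => intro η; rw [pow_one]; exact hTe0 η
      | succ n IH =>
        intro η
        rw [pow_succ, mul_apply_eq_comp, hTe n η, IH η]
    intro k n η hnk
    obtain ⟨j, rfl⟩ : ∃ j, k = j + (n+1) := ⟨k - (n+1), by omega⟩
    rw [pow_add, mul_apply_eq_comp, base n η, map_zero]
  -- norm identity
  have hnorm : ∀ (η : E) (F : Finset ℕ),
      (∑ n ∈ F, ∑ m ∈ F, (1 / ((n.factorial : ℂ) * (m.factorial : ℂ))) *
        (inner ℂ (K m η) (K n η) : ℂ)) = (((‖∑ n ∈ F, e n η‖^2 : ℝ)) : ℂ) := by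
    intro η F
    have hself : ((inner ℂ (∑ n ∈ F, e n η) (∑ n ∈ F, e n η) : ℂ)) =
        (((‖∑ n ∈ F, e n η‖^2 : ℝ)) : ℂ) := by
      rw [inner_self_eq_norm_sq_to_K]; norm_cast
    rw [← hself, sum_inner]
    rw [Finset.sum_comm]
    refine Finset.sum_congr rfl fun m _ => ?_
    rw [inner_sum]
    refine Finset.sum_congr rfl fun n _ => ?_
    rw [he]
    simp only [inner_smul_left, inner_smul_right]
    rw [Complex.conj_inv, Complex.conj_natCast]
    field_simp
  have hbound : ∀ η ∈ E₀, ∀ ε > (0:ℝ), ∃ N : ℕ, ∀ F : Finset ℕ, (∀ n ∈ F, N ≤ n) →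
      ‖∑ n ∈ F, e n η‖ < ε := by
    intro η hη ε hε
    obtain ⟨N, hN⟩ := hsum η hη (ε^2) (by positivity)
    refine ⟨N, fun F hF => ?_⟩
    have := hN F hF
    rw [hnorm η F] at this
    have h2 : ‖∑ n ∈ F, e n η‖^2 < ε^2 := by
      rw [Complex.norm_real, Real.norm_of_nonneg (by positivity)] at this
      exact this
    nlinarith [norm_nonneg (∑ n ∈ F, e n η)]
  have hdense : Dense ((Submodule.span ℂ {x : H | ∃ n η, η ∈ E₀ ∧ x = K n η} : Submodule ℂ H) : Set H) := by
    set SP : Submodule ℂ H := Submodule.span ℂ {x : H | ∃ n η, η ∈ E₀ ∧ x = K n η} with hSP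
    rw [Submodule.dense_iff_topologicalClosure_eq_top, Submodule.topologicalClosure_eq_top_iff,
      Submodule.eq_bot_iff]
    intro f hf
    have horto : ∀ (n : ℕ) (η : E), η ∈ E₀ → (inner ℂ f (K n η) : ℂ) = 0 := by
      intro n η hη
      have h1 : (inner ℂ (K n η) f : ℂ) = 0 :=
        (Submodule.mem_orthogonal SP f).mp hf (K n η) (Submodule.subset_span ⟨n, η, hη, rfl⟩)
      rw [← inner_conj_symm, h1, map_zero]
    have hders : ∀ n : ℕ, iteratedDeriv n (ι f) 0 = 0 := by
      intro n
      set v := iteratedDeriv n (ι f) 0 with hv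
      have hv0 : ∀ η ∈ E₀, (inner ℂ v η : ℂ) = 0 := by
        intro η hη
        rw [← hKd n η f]; exact horto n η hη
      have hker : Submodule.span ℂ E₀ ≤ LinearMap.ker ((innerSL ℂ v : E →L[ℂ] ℂ) : E →ₗ[ℂ] ℂ) :=
        Submodule.span_le.mpr (fun η hη => by
          simp only [SetLike.mem_coe, LinearMap.mem_ker]
          exact hv0 η hη)
      have hcl : IsClosed ((LinearMap.ker ((innerSL ℂ v : E →L[ℂ] ℂ) : E →ₗ[ℂ] ℂ) : Submodule ℂ E) : Set E) :=
        ContinuousLinearMap.isClosed_ker _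
      have hall : ∀ η : E, (inner ℂ v η : ℂ) = 0 := by
        intro η
        have h1 : η ∈ closure ((Submodule.span ℂ E₀ : Submodule ℂ E) : Set E) := by
          rw [hE₀.closure_eq]; trivial
        have h2 := (hcl.closure_subset_iff.mpr hker) h1
        simpa using h2
      exact inner_self_eq_zero.mp (hall v)
    have hz : Set.EqOn (ι f) (ι 0) (ball (0:ℂ) 1) := by
      intro z hzB
      have h := Complex.hasSum_taylorSeries_on_ball (hanal f) hzB
      simp only [hders, smul_zero] at h
      have : ι f z = 0 := (h.unique hasSum_zero)
      rw [this, map_zero]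
      rfl
    exact hinj f 0 hz
  refine ⟨?_, ?_⟩
  · -- hypercyclicity
    set SP : Submodule ℂ H := Submodule.span ℂ {x : H | ∃ n η, η ∈ E₀ ∧ x = K n η} with hSP
    -- T is eventually zero on SP
    have Q1 : ∀ x ∈ SP, ∃ n₀ : ℕ, ∀ n ≥ n₀, (T^n) x = 0 := by
      intro x hx
      induction hx using Submodule.span_induction with
      | mem x hx =>
        obtain ⟨m, η, hη, rfl⟩ := hx
        refine ⟨m+1, fun n hn => ?_⟩
        rw [hKe m η, map_smul, hTzero n m η (by omega), smul_zero]
      | zero => exact ⟨0, fun n _ => map_zero _⟩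
      | add x y hx hy ihx ihy =>
        obtain ⟨n₁, h1⟩ := ihx
        obtain ⟨n₂, h2⟩ := ihy
        refine ⟨max n₁ n₂, fun n hn => ?_⟩
        rw [map_add, h1 n (le_trans (le_max_left _ _) hn), h2 n (le_trans (le_max_right _ _) hn),
          add_zero]
      | smul c x hx ihx =>
        obtain ⟨n₁, h1⟩ := ihx
        exact ⟨n₁, fun n hn => by rw [map_smul, h1 n hn, smul_zero]⟩
    -- approximate right inverses with small norm
    have Q2 : ∀ y ∈ SP, ∀ ε > (0:ℝ), ∃ n₀ : ℕ, ∀ n ≥ n₀, ∃ z : H,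
        (T^n) z = y ∧ ‖z‖ ≤ ε := by
      intro y hy
      induction hy using Submodule.span_induction with
      | mem y hy =>
        obtain ⟨m, η, hη, rfl⟩ := hy
        intro ε hε
        have hm1 : (0:ℝ) < (m.factorial : ℝ) + 1 := by positivity
        obtain ⟨N, hN⟩ := hbound η hη (ε / ((m.factorial : ℝ) + 1)) (by positivity)
        refine ⟨N, fun n hn => ?_⟩
        refine ⟨(m.factorial : ℂ) • e (m+n) η, ?_, ?_⟩
        · rw [map_smul, hTpow n m η, ← hKe m η]
        · have hsingle : ‖∑ i ∈ {m+n}, e i η‖ < ε / ((m.factorial : ℝ) + 1) := by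
            apply hN
            intro i hi
            rw [Finset.mem_singleton] at hi
            omega
          rw [Finset.sum_singleton] at hsingle
          rw [norm_smul]
          have h9 : ‖(m.factorial : ℂ)‖ = (m.factorial : ℝ) := by
            simp
          rw [h9]
          calc (m.factorial : ℝ) * ‖e (m+n) η‖
              ≤ ((m.factorial : ℝ) + 1) * (ε / ((m.factorial : ℝ) + 1)) := by
                apply mul_le_mul (by linarith) (le_of_lt hsingle) (norm_nonneg _) (by positivity)
            _ = ε := by field_simp
      | zero => exact fun ε hε => ⟨0, fun n _ => ⟨0, map_zero _, by simp [le_of_lt hε]⟩⟩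
      | add x y hx hy ihx ihy =>
        intro ε hε
        obtain ⟨n₁, h1⟩ := ihx (ε/2) (by positivity)
        obtain ⟨n₂, h2⟩ := ihy (ε/2) (by positivity)
        refine ⟨max n₁ n₂, fun n hn => ?_⟩
        obtain ⟨z₁, hz1, hz1n⟩ := h1 n (le_trans (le_max_left _ _) hn)
        obtain ⟨z₂, hz2, hz2n⟩ := h2 n (le_trans (le_max_right _ _) hn)
        refine ⟨z₁ + z₂, by rw [map_add, hz1, hz2], ?_⟩
        calc ‖z₁ + z₂‖ ≤ ‖z₁‖ + ‖z₂‖ := norm_add_le _ _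
          _ ≤ ε/2 + ε/2 := add_le_add hz1n hz2n
          _ = ε := by ring
      | smul c x hx ihx =>
        intro ε hε
        obtain ⟨n₁, h1⟩ := ihx (ε / (‖c‖ + 1)) (by positivity)
        refine ⟨n₁, fun n hn => ?_⟩
        obtain ⟨z, hz, hzn⟩ := h1 n hn
        refine ⟨c • z, by rw [map_smul, hz], ?_⟩
        rw [norm_smul]
        calc ‖c‖ * ‖z‖ ≤ (‖c‖ + 1) * (ε / (‖c‖ + 1)) := by
              apply mul_le_mul (by linarith) hzn (norm_nonneg _) (by positivity)
          _ = ε := by field_simp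
    -- topological transitivity
    have htrans : ∀ U V : Set H, IsOpen U → IsOpen V → U.Nonempty → V.Nonempty →
        ∃ (x : H) (n : ℕ), x ∈ U ∧ (T^n) x ∈ V := by
      intro U V hU hV ⟨u, hu⟩ ⟨v, hv⟩
      obtain ⟨δ, hδ, hballU⟩ := Metric.isOpen_iff.mp hU u hu
      obtain ⟨δ', hδ', hballV⟩ := Metric.isOpen_iff.mp hV v hv
      obtain ⟨x₀, hx₀m, hx₀⟩ : ∃ x₀ ∈ (SP : Set H), dist u x₀ < δ/2 := by
        have := Metric.dense_iff.mp hdense u (δ/2) (by positivity)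
        obtain ⟨x₀, hx1, hx2⟩ := this
        exact ⟨x₀, hx2, by rwa [mem_ball, dist_comm] at hx1⟩
      obtain ⟨y₀, hy₀m, hy₀⟩ : ∃ y₀ ∈ (SP : Set H), dist v y₀ < δ'/2 := by
        have := Metric.dense_iff.mp hdense v (δ'/2) (by positivity)
        obtain ⟨y₀, hy1, hy2⟩ := this
        exact ⟨y₀, hy2, by rwa [mem_ball, dist_comm] at hy1⟩
      obtain ⟨n₁, h1⟩ := Q1 x₀ hx₀m
      obtain ⟨n₂, h2⟩ := Q2 y₀ hy₀m (δ/2) (by positivity)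
      set n := max n₁ n₂ with hn
      obtain ⟨z, hz, hzn⟩ := h2 n (le_max_right _ _)
      refine ⟨x₀ + z, n, ?_, ?_⟩
      · apply hballU
        rw [mem_ball, dist_eq_norm]
        calc ‖x₀ + z - u‖ ≤ ‖x₀ - u‖ + ‖z‖ := by
              have : x₀ + z - u = (x₀ - u) + z := by abel
              rw [this]; exact norm_add_le _ _
          _ < δ/2 + δ/2 := by
              apply add_lt_add_of_lt_of_le
              · rwa [← dist_eq_norm, dist_comm]
              · exact hzn
          _ = δ := by ring
      · rw [map_add, h1 n (le_max_left _ _), hz, zero_add]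
        apply hballV
        rw [mem_ball, dist_comm]
        linarith
    -- Birkhoff transitivity via Baire
    haveI : Nonempty H := ⟨0⟩
    haveI : SecondCountableTopology H :=
      UniformSpace.secondCountable_of_separable H
    set b := TopologicalSpace.countableBasis H with hb_def
    have hb : TopologicalSpace.IsTopologicalBasis b := TopologicalSpace.isBasis_countableBasis H
    have hbc : b.Countable := TopologicalSpace.countable_countableBasis H
    set S : Set (Set H) := (fun U => ⋃ n : ℕ, (fun x => (T^n) x) ⁻¹' U) '' {U ∈ b | U.Nonempty}
      with hS_def
    have hSc : S.Countable := (hbc.mono (Set.sep_subset _ _)).image _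
    have hSo : ∀ s ∈ S, IsOpen s := by
      rintro s ⟨U, ⟨hUb, _⟩, rfl⟩
      exact isOpen_iUnion fun n => (hb.isOpen hUb).preimage (T^n).continuous
    have hSd : ∀ s ∈ S, Dense s := by
      rintro s ⟨U, ⟨hUb, hUne⟩, rfl⟩
      rw [dense_iff_inter_open]
      intro V hV hVne
      obtain ⟨x, n, hxV, hxU⟩ := htrans V U hV (hb.isOpen hUb) hVne hUne
      exact ⟨x, hxV, Set.mem_iUnion.mpr ⟨n, hxU⟩⟩
    have hG : Dense (⋂₀ S) := dense_sInter_of_isOpen hSo hSc hSd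
    obtain ⟨g, hg⟩ := hG.nonempty
    refine ⟨g, ?_⟩
    rw [dense_iff_inter_open]
    intro W hW hWne
    obtain ⟨w, hw⟩ := hWne
    obtain ⟨U, hUb, hwU, hUW⟩ := hb.mem_nhds_iff.mp (hW.mem_nhds hw)
    have hUS : (⋃ n : ℕ, (fun x => (T^n) x) ⁻¹' U) ∈ S :=
      ⟨U, ⟨hUb, ⟨w, hwU⟩⟩, rfl⟩
    obtain ⟨n, hn⟩ := Set.mem_iUnion.mp (hg _ hUS)
    exact ⟨(T^n) g, hUW hn, ⟨n, rfl⟩⟩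
  · -- dense periodic points
    have hfin : ∀ η ∈ E₀, ∀ ε > (0:ℝ), ∃ N : ℕ, ∀ (t : Finset ℕ) (idx : ℕ → ℕ),
        (∀ j ∈ t, ∀ i ∈ t, idx j = idx i → j = i) → (∀ j ∈ t, N ≤ idx j) →
        ‖∑ j ∈ t, e (idx j) η‖ < ε := by
      intro η hη ε hε
      obtain ⟨N, hN⟩ := hbound η hη ε hε
      refine ⟨N, fun t idx hinj hge => ?_⟩
      have h1 : ∑ m ∈ t.image idx, e m η = ∑ j ∈ t, e (idx j) η := Finset.sum_image hinj
      rw [← h1]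
      apply hN
      intro m hm
      obtain ⟨j, hj, rfl⟩ := Finset.mem_image.mp hm
      exact hge j hj
    have hsummable : ∀ η ∈ E₀, ∀ idx : ℕ → ℕ, Function.Injective idx →
        (∀ j, j ≤ idx j) → Summable (fun j => e (idx j) η) := by
      intro η hη idx hinj hge
      rw [summable_iff_vanishing_norm]
      intro ε hε
      obtain ⟨N, hN⟩ := hfin η hη ε hε
      refine ⟨Finset.range N, fun t ht => ?_⟩
      refine hN t idx (fun j _ i _ h => hinj h) (fun j hj => ?_)
      have h2 : j ∉ Finset.range N := Finset.disjoint_left.mp ht hj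
      rw [Finset.mem_range, not_lt] at h2
      exact le_trans h2 (hge j)
    have happrox : ∀ η ∈ E₀, ∀ n : ℕ, ∀ ε > (0:ℝ), ∃ y : H,
        (∃ k, 1 ≤ k ∧ (T^k) y = y) ∧ ‖y - e n η‖ ≤ ε := by
      intro η hη n ε hε
      obtain ⟨N, hN⟩ := hfin η hη ε hε
      set k := N + n + 1 with hk
      have hk1 : 0 < k := by omega
      set idx : ℕ → ℕ := fun j => n + j * k with hidx
      have hidxinj : Function.Injective idx := by
        intro a b hab
        simp only [hidx] at hab
        have : a * k = b * k := by omega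
        exact Nat.eq_of_mul_eq_mul_right hk1 this
      have hidxge : ∀ j, j ≤ idx j := by
        intro j
        have : j * 1 ≤ j * k := Nat.mul_le_mul_left j hk1
        simp only [hidx]; omega
      have hS := hsummable η hη idx hidxinj hidxge
      set y := ∑' j, e (idx j) η with hy
      have hsum : HasSum (fun j => e (idx j) η) y := hS.hasSum
      have hmap : HasSum (fun j => (T^k) (e (idx j) η)) ((T^k) y) := (T^k).hasSum hsum
      have hfun : (fun j => (T^k) (e (idx j) η)) =
          (fun j => if j = 0 then 0 else e (idx (j-1)) η) := by
        funext j
        cases j with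
        | zero =>
          simp only [hidx, Nat.zero_mul, Nat.add_zero, if_pos rfl]
          exact hTzero k n η (by omega)
        | succ m =>
          simp only [Nat.succ_ne_zero, if_false, Nat.succ_sub_one]
          have h3 : idx (m+1) = (idx m) + k := by simp only [hidx]; ring
          rw [h3]
          exact hTpow k (idx m) η
      rw [hfun] at hmap
      have hgsum : HasSum (fun j => if j = 0 then 0 else e (idx (j-1)) η) y := by
        apply (Function.Injective.hasSum_iff Nat.succ_injective ?_).mp
        · have h4 : ((fun j => if j = 0 then 0 else e (idx (j-1)) η) ∘ Nat.succ) =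
              fun j => e (idx j) η := by
            funext j; simp
          rw [h4]; exact hsum
        · intro x hx
          have : x = 0 := by
            rcases Nat.eq_zero_or_pos x with h | h
            · exact h
            · exact absurd ⟨x - 1, Nat.succ_pred_eq_of_pos h⟩ hx
          simp [this]
      have hper : (T^k) y = y := hmap.unique hgsum
      have htail : HasSum (fun j => e (idx (j+1)) η) (y - e n η) := by
        have h5 := (hasSum_nat_add_iff' 1).mpr hsum
        simpa [hidx] using h5
      have hnorm_le : ‖y - e n η‖ ≤ ε := by
        have hten : Tendsto (fun t : Finset ℕ => ‖∑ j ∈ t, e (idx (j+1)) η‖) atTop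
            (nhds ‖y - e n η‖) := (continuous_norm.tendsto _).comp htail
        apply le_of_tendsto hten
        filter_upwards with t
        apply le_of_lt
        refine hN t (fun j => idx (j+1)) (fun j _ i _ h => by
          have := hidxinj h; omega) (fun j hj => ?_)
        simp only [hidx]
        have : 1 * k ≤ (j+1) * k := Nat.mul_le_mul_right k (by omega)
        omega
      exact ⟨y, ⟨k, by omega, hper⟩, hnorm_le⟩
    -- the periodic points form a submodule
    have hfix_iter : ∀ (S : H →L[ℂ] H) (y : H), S y = y → ∀ l, (S^l) y = y := by
      intro S y hy l
      induction l with
      | zero => simp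
      | succ l IH => rw [pow_succ, mul_apply_eq_comp, hy, IH]
    set P : Submodule ℂ H :=
      { carrier := {y : H | ∃ k : ℕ, 1 ≤ k ∧ (T ^ k) y = y}
        add_mem' := by
          rintro y z ⟨k, hk, hky⟩ ⟨l, hl, hlz⟩
          refine ⟨k * l, Nat.one_le_iff_ne_zero.mpr (by positivity), ?_⟩
          rw [map_add]
          have h6 : (T^(k*l)) y = y := by
            rw [pow_mul]; exact hfix_iter (T^k) y hky l
          have h7 : (T^(k*l)) z = z := by
            rw [mul_comm, pow_mul]; exact hfix_iter (T^l) z hlz k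
          rw [h6, h7]
        zero_mem' := ⟨1, le_refl 1, map_zero _⟩
        smul_mem' := by
          rintro c y ⟨k, hk, hky⟩
          exact ⟨k, hk, by rw [map_smul, hky]⟩ } with hP
    have hPe : ∀ η ∈ E₀, ∀ n : ℕ, e n η ∈ P.topologicalClosure := by
      intro η hη n
      have h8 : e n η ∈ closure (P : Set H) := by
        rw [Metric.mem_closure_iff]
        intro ε hε
        obtain ⟨y, hyper, hny⟩ := happrox η hη n (ε/2) (by positivity)
        refine ⟨y, hyper, ?_⟩
        rw [dist_eq_norm, norm_sub_rev]
        calc ‖y - e n η‖ ≤ ε/2 := hny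
          _ < ε := by linarith
      exact h8
    have hsub : (Submodule.span ℂ {x : H | ∃ n η, η ∈ E₀ ∧ x = K n η} : Submodule ℂ H)
        ≤ P.topologicalClosure := by
      apply Submodule.span_le.mpr
      rintro x ⟨n, η, hη, rfl⟩
      rw [hKe n η]
      exact Submodule.smul_mem _ _ (hPe η hη n)
    have hPdense : Dense (closure (P : Set H)) := by
      apply hdense.mono
      exact_mod_cast hsub
    rw [dense_closure] at hPdense
    exact hPdense
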